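/- Consider minimizing f(t) = tᵀG̃t + 2wᵀt over the product of simplices Δ = {t ∈ ℝ^{nM} : eᵀt̄_j = 1 ∀j, t ≥ 0}, where G̃ is symmetric with zero diagonal blocks. Then there exists a global minimizer t* of f over Δ with ‖t*‖₀ = n, i.e., each block t̄*_j is a standard basis vector of ℝ^M. -/

import Mathlib

open Matrix

private lemma dot_symm {N : Type*} [Fintype N] (A : Matrix N N ℝ) (h : A.IsSymm)
    (v w : N → ℝ) : v ⬝ᵥ A.mulVec w = w ⬝ᵥ A.mulVec v := by
  rw [Matrix.dotProduct_mulVec, ← h, Matrix.vecMul_transpose, dotProduct_comm, h]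

section
variable {n M : ℕ}
  (G : Matrix (Fin n × Fin M) (Fin n × Fin M) ℝ)
  (w : Fin n × Fin M → ℝ) (j : Fin n)

/-- extension of a block vector by zero -/
private def iot (j : Fin n) (x : Fin M → ℝ) : Fin n × Fin M → ℝ :=
  fun p => if p.1 = j then x p.2 else 0

private lemma dot_iot (x : Fin M → ℝ) (z : Fin n × Fin M → ℝ) :
    iot j x ⬝ᵥ z = ∑ i, x i * z (j, i) := by
  rw [dotProduct, Fintype.sum_prod_type]
  rw [Finset.sum_eq_single j]
  · simp [iot]
  · intro b _ hb
    simp [iot, hb]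
  · simp

private lemma iot_dot (x : Fin M → ℝ) (z : Fin n × Fin M → ℝ) :
    z ⬝ᵥ iot j x = ∑ i, x i * z (j, i) := by
  rw [dotProduct_comm, dot_iot]

private lemma iot_quad (hdiag : ∀ (j : Fin n) (i l : Fin M), G (j, i) (j, l) = 0)
    (x : Fin M → ℝ) : iot j x ⬝ᵥ G.mulVec (iot j x) = 0 := by
  rw [dot_iot]
  apply Finset.sum_eq_zero
  intro i _
  have : G.mulVec (iot j x) (j, i) = 0 := by
    rw [Matrix.mulVec, dotProduct, Fintype.sum_prod_type]
    apply Finset.sum_eq_zero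
    intro b _
    rcases eq_or_ne b j with rfl | hb
    · apply Finset.sum_eq_zero; intro l _; simp [hdiag]
    · apply Finset.sum_eq_zero; intro l _; simp [iot, hb]
  rw [this, mul_zero]

private lemma affine_expand (hsym : G.IsSymm)
    (hdiag : ∀ (j : Fin n) (i l : Fin M), G (j, i) (j, l) = 0)
    (u : Fin n × Fin M → ℝ) (x : Fin M → ℝ) :
    (u + iot j x) ⬝ᵥ G.mulVec (u + iot j x) + 2 * (w ⬝ᵥ (u + iot j x))
      = (u ⬝ᵥ G.mulVec u + 2 * (w ⬝ᵥ u))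
        + ∑ i, x i * (2 * (G.mulVec u (j, i) + w (j, i))) := by
  rw [Matrix.mulVec_add, dotProduct_add, add_dotProduct,
    add_dotProduct, dotProduct_add,
    iot_quad G j hdiag, dot_symm G hsym u (iot j x),
    dot_iot, iot_dot]
  have h1 : ∑ i, x i * (2 * (G.mulVec u (j, i) + w (j, i)))
      = (∑ i, x i * G.mulVec u (j, i)) + ((∑ i, x i * G.mulVec u (j, i))
          + 2 * ∑ i, x i * w (j, i)) := by
    rw [Finset.mul_sum, ← Finset.sum_add_distrib, ← Finset.sum_add_distrib]
    apply Finset.sum_congr rfl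
    intro i _
    ring
  rw [h1]
  ring

end

section
variable {n M : ℕ}

private lemma step_lemma (hM : 0 < M)
    (G : Matrix (Fin n × Fin M) (Fin n × Fin M) ℝ) (hsym : G.IsSymm)
    (hdiag : ∀ (j : Fin n) (i l : Fin M), G (j, i) (j, l) = 0)
    (w : Fin n × Fin M → ℝ) (t : Fin n × Fin M → ℝ) (j : Fin n)
    (hsum : ∑ i, t (j, i) = 1) (hpos : ∀ p, 0 ≤ t p) :
    ∃ i0 : Fin M,
      ((fun p => if p.1 = j then (if p.2 = i0 then (1:ℝ) else 0) else t p) ⬝ᵥ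
        G.mulVec (fun p => if p.1 = j then (if p.2 = i0 then (1:ℝ) else 0) else t p)
        + 2 * (w ⬝ᵥ fun p => if p.1 = j then (if p.2 = i0 then (1:ℝ) else 0) else t p))
      ≤ t ⬝ᵥ G.mulVec t + 2 * (w ⬝ᵥ t) := by
  classical
  set u : Fin n × Fin M → ℝ := fun p => if p.1 = j then 0 else t p with hu
  set b : Fin M → ℝ := fun i => 2 * (G.mulVec u (j, i) + w (j, i)) with hb
  have ht : t = u + iot j (fun i => t (j, i)) := by
    funext p
    rcases p with ⟨a, i⟩
    by_cases h : a = j <;> simp [hu, iot, h]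
  have ht' : ∀ i0 : Fin M,
      (fun p : Fin n × Fin M => if p.1 = j then (if p.2 = i0 then (1:ℝ) else 0) else t p)
        = u + iot j (fun i => if i = i0 then (1:ℝ) else 0) := by
    intro i0
    funext p
    rcases p with ⟨a, i⟩
    by_cases h : a = j <;> simp [hu, iot, h]
  have : Nonempty (Fin M) := ⟨⟨0, hM⟩⟩
  obtain ⟨i0, -, hi0⟩ := Finset.exists_min_image Finset.univ b ⟨Classical.arbitrary _, Finset.mem_univ _⟩
  refine ⟨i0, ?_⟩
  rw [ht' i0]
  conv_rhs => rw [ht]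
  rw [affine_expand G w j hsym hdiag, affine_expand G w j hsym hdiag]
  apply add_le_add_right
  have hL : ∑ i, (if i = i0 then (1:ℝ) else 0) * b i = b i0 := by
    simp
  rw [hL]
  calc b i0 = ∑ i, t (j, i) * b i0 := by rw [← Finset.sum_mul, hsum, one_mul]
    _ ≤ ∑ i, t (j, i) * b i :=
        Finset.sum_le_sum fun i _ => mul_le_mul_of_nonneg_left (hi0 i (Finset.mem_univ i)) (hpos _)

end

/-- The quadratic `f(t) = tᵀG̃t + 2wᵀt`, with `G̃` symmetric and zero diagonal
blocks, has a global minimizer over the product of simplices all of whose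
blocks are standard basis vectors (so `‖t*‖₀ = n`). -/
theorem stmt_14 {n M : ℕ} (hM : 0 < M)
    (G : Matrix (Fin n × Fin M) (Fin n × Fin M) ℝ)
    (hsym : G.IsSymm)
    (hdiag : ∀ (j : Fin n) (i l : Fin M), G (j, i) (j, l) = 0)
    (w : Fin n × Fin M → ℝ)
    (f : (Fin n × Fin M → ℝ) → ℝ)
    (hf : ∀ t, f t = t ⬝ᵥ G.mulVec t + 2 * (w ⬝ᵥ t))
    (Δ : Set (Fin n × Fin M → ℝ))
    (hΔ : Δ = {t | (∀ j : Fin n, ∑ i : Fin M, t (j, i) = 1) ∧ ∀ p, 0 ≤ t p}) :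
    ∃ ts ∈ Δ, (∀ s ∈ Δ, f ts ≤ f s) ∧
      ∃ σ : Fin n → Fin M, ∀ p : Fin n × Fin M, ts p = if p.2 = σ p.1 then 1 else 0 := by
  classical
  set F : (Fin n × Fin M → ℝ) → ℝ := fun s => s ⬝ᵥ G.mulVec s + 2 * (w ⬝ᵥ s) with hF
  have hcont : Continuous F := by
    simp only [hF, dotProduct, mulVec]
    fun_prop
  -- Δ is nonempty
  have hne : Δ.Nonempty := by
    refine ⟨fun p => if p.2 = ⟨0, hM⟩ then 1 else 0, ?_⟩
    rw [hΔ]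
    constructor
    · intro j; simp
    · intro p; positivity
  -- Δ is compact
  have hsub : Δ ⊆ Set.pi Set.univ fun _ : Fin n × Fin M => Set.Icc (0:ℝ) 1 := by
    rw [hΔ]
    rintro t ⟨h1, h2⟩ p _
    refine ⟨h2 p, ?_⟩
    calc t p = t (p.1, p.2) := rfl
      _ ≤ ∑ i, t (p.1, i) :=
          Finset.single_le_sum (fun i _ => h2 (p.1, i)) (Finset.mem_univ p.2)
      _ = 1 := h1 p.1
  have hclosed : IsClosed Δ := by
    have : Δ = (⋂ j, {t : Fin n × Fin M → ℝ | ∑ i, t (j, i) = 1}) ∩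
        ⋂ p, {t : Fin n × Fin M → ℝ | 0 ≤ t p} := by
      rw [hΔ]; ext t; simp [Set.mem_iInter]
    rw [this]
    exact (isClosed_iInter fun j =>
        isClosed_eq (by fun_prop) continuous_const).inter
      (isClosed_iInter fun p => isClosed_le continuous_const (continuous_apply p))
  have hcompact : IsCompact Δ :=
    (isCompact_univ_pi fun _ => isCompact_Icc).of_isClosed_subset hclosed hsub
  obtain ⟨t₀, ht₀Δ, hmin₀⟩ := hcompact.exists_isMinOn hne hcont.continuousOn
  have hmin₀' : ∀ s ∈ Δ, F t₀ ≤ F s := fun s hs => hmin₀ hs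
  -- induction over blocks
  have main : ∀ S : Finset (Fin n), ∃ t ∈ Δ, (∀ s ∈ Δ, F t ≤ F s) ∧
      ∀ j ∈ S, ∃ i : Fin M, ∀ l, t (j, l) = if l = i then 1 else 0 := by
    intro S
    induction S using Finset.induction_on with
    | empty => exact ⟨t₀, ht₀Δ, hmin₀', by simp⟩
    | @insert j S hjS ih =>
      obtain ⟨t, htΔ, hmin, hvert⟩ := ih
      have htΔ' := htΔ
      rw [hΔ] at htΔ'
      obtain ⟨hsum, hpos⟩ := htΔ'
      obtain ⟨i0, hle⟩ := step_lemma hM G hsym hdiag w t j (hsum j) hpos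
      set t' : Fin n × Fin M → ℝ :=
        fun p => if p.1 = j then (if p.2 = i0 then (1:ℝ) else 0) else t p with ht'
      have ht'Δ : t' ∈ Δ := by
        rw [hΔ]
        constructor
        · intro j'
          by_cases h : j' = j
          · subst h; simp [ht']
          · simp only [ht', h, if_false]
            exact hsum j'
        · intro p
          rcases p with ⟨a, i⟩
          by_cases h : a = j
          · simp only [ht', h, if_true]
            positivity
          · simp only [ht', h, if_false]
            exact hpos _
      refine ⟨t', ht'Δ, fun s hs => le_trans hle (hmin s hs), ?_⟩
      intro j' hj'
      rcases Finset.mem_insert.mp hj' with rfl | hj'S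
      · exact ⟨i0, fun l => by simp [ht']⟩
      · obtain ⟨i, hi⟩ := hvert j' hj'S
        have hne' : j' ≠ j := fun h => hjS (h ▸ hj'S)
        exact ⟨i, fun l => by simp only [ht', hne', if_false]; exact hi l⟩
  obtain ⟨t, htΔ, hmin, hvert⟩ := main Finset.univ
  choose σ hσ using fun j => hvert j (Finset.mem_univ j)
  refine ⟨t, htΔ, fun s hs => by rw [hf, hf]; exact hmin s hs, σ, fun p => hσ p.1 p.2⟩
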